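/- Assume D = 0, Re(λ_i) ≠ 0 for all i, and λ_i + λ_k ≠ 0 for all i, k (so that no λ_i is purely imaginary and each H(−λ_i) is well defined). Then the limit as ω → +∞ of ‖H‖²_{H2,ω} exists, is finite, and equals tr( Σ_{i : Re(λ_i)<0} φ_i·H(−λ_i)ᵀ ) − tr( Σ_{i : Re(λ_i)>0} φ_i·H(−λ_i)ᵀ ). -/

import Mathlib

open Complex Matrix MeasureTheory intervalIntegral BigOperators

/-- Strictly proper transfer function `H(s) = Σᵢ (s − λᵢ)⁻¹ • φᵢ`. -/
noncomputable def transferH {n n_u n_y : ℕ} (lam : Fin n → ℂ)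
    (φ : Fin n → Matrix (Fin n_y) (Fin n_u) ℂ) (s : ℂ) : Matrix (Fin n_y) (Fin n_u) ℂ :=
  ∑ i, (s - lam i)⁻¹ • φ i

/-- Squared frequency-limited H2-norm:
`‖H‖²_{H2,ω} = (1/(2π)) ∫_{−ω}^{ω} tr(H(iν)·H(−iν)ᵀ) dν`. -/
noncomputable def h2wSq {n n_u n_y : ℕ} (lam : Fin n → ℂ)
    (φ : Fin n → Matrix (Fin n_y) (Fin n_u) ℂ) (ω : ℝ) : ℂ :=
  (2 * (Real.pi : ℂ))⁻¹ * ∫ ν : ℝ in (-ω)..ω,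
    (transferH lam φ (Complex.I * (ν : ℂ)) *
      (transferH lam φ (-(Complex.I * (ν : ℂ))))ᵀ).trace

open Complex Filter Topology intervalIntegral

noncomputable def prim (l : ℂ) (ν : ℝ) : ℂ :=
  -((Real.arctan ((ν - l.im)/l.re) : ℝ) : ℂ)
    - (Complex.I/2) * ((Real.log (l.re^2 + (ν - l.im)^2) : ℝ) : ℂ)

lemma denom_pos (l : ℂ) (h : l.re ≠ 0) (x : ℝ) : 0 < l.re^2 + x^2 := by positivity

lemma key_alg (l : ℂ) (h : l.re ≠ 0) (ν : ℝ) :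
    (Complex.I * ν - l) * (-(l.re:ℂ) - Complex.I*((ν:ℂ) - l.im))
      = ((l.re^2 + (ν - l.im)^2 : ℝ) : ℂ) := by
  have hl := Complex.re_add_im l
  push_cast
  linear_combination (-(((ν:ℂ) - l.im)^2)) * Complex.I_sq
    + (-(l.re:ℂ) - Complex.I*((ν:ℂ) - l.im)) * hl

lemma inv_formula (l : ℂ) (h : l.re ≠ 0) (ν : ℝ) :
    (Complex.I * ν - l)⁻¹
      = (-(l.re:ℂ) - Complex.I*((ν:ℂ) - l.im)) / ((l.re^2 + (ν - l.im)^2 : ℝ) : ℂ) := by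
  have hp := denom_pos l h (ν - l.im)
  have hne : ((l.re^2 + (ν - l.im)^2 : ℝ) : ℂ) ≠ 0 := by
    exact_mod_cast hp.ne'
  have hd : (Complex.I * ν - l) ≠ 0 := by
    intro h0
    have := key_alg l h ν
    rw [h0, zero_mul] at this
    exact hne this.symm
  rw [eq_div_iff hne, ← key_alg l h ν, inv_mul_cancel_left₀ hd]

lemma prim_hasDerivAt (l : ℂ) (h : l.re ≠ 0) (ν : ℝ) :
    HasDerivAt (prim l) ((Complex.I * ν - l)⁻¹) ν := by
  set a := l.re with ha
  set b := l.im with hb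
  have hp : (0:ℝ) < a^2 + (ν - b)^2 := denom_pos l h _
  -- arctan part
  have h1r : HasDerivAt (fun ν : ℝ => Real.arctan ((ν - b)/a))
      ((1/(1+((ν - b)/a)^2)) * (1/a)) ν := by
    have hin : HasDerivAt (fun ν : ℝ => (ν - b)/a) (1/a) ν := by
      simpa using ((hasDerivAt_id ν).sub_const b).div_const a
    exact (Real.hasDerivAt_arctan ((ν - b)/a)).comp ν hin
  -- log part
  have h2r : HasDerivAt (fun ν : ℝ => Real.log (a^2 + (ν - b)^2))
      ((a^2 + (ν - b)^2)⁻¹ * (2*(ν - b))) ν := by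
    have hin : HasDerivAt (fun ν : ℝ => a^2 + (ν - b)^2) (2*(ν - b)) ν := by
      have : HasDerivAt (fun ν : ℝ => (ν - b)^2) (2*(ν - b)) ν := by
        simpa using ((hasDerivAt_id ν).sub_const b).fun_pow 2
      simpa using this.const_add (a^2)
    exact (Real.hasDerivAt_log hp.ne').comp ν hin
  have hD : HasDerivAt (prim l)
      (-(((1/(1+((ν - b)/a)^2)) * (1/a) : ℝ) : ℂ)
        - (Complex.I/2) * (((a^2 + (ν - b)^2)⁻¹ * (2*(ν - b)) : ℝ) : ℂ)) ν := by
    exact (h1r.ofReal_comp.neg).sub ((h2r.ofReal_comp).const_mul (Complex.I/2))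
  convert hD using 1
  rw [inv_formula l h ν]
  have hane : (a:ℝ) ≠ 0 := h
  have h1 : (1:ℝ)+((ν - b)/a)^2 = (a^2 + (ν-b)^2)/a^2 := by
    field_simp
  rw [h1]
  push_cast
  have hpc : ((a:ℂ)^2 + ((ν:ℂ) - b)^2) ≠ 0 := by
    have : ((a^2 + (ν - b)^2 : ℝ) : ℂ) ≠ 0 := by exact_mod_cast hp.ne'
    push_cast at this; exact this
  have hac : (a:ℂ) ≠ 0 := by exact_mod_cast hane
  field_simp
  simp only [← ha, ← hb]
  rw [mul_div_assoc, div_self hpc, mul_one]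

noncomputable def sg (l : ℂ) : ℝ := if 0 < l.re then 1 else -1

lemma denom_ne (l : ℂ) (h : l.re ≠ 0) (ν : ℝ) : Complex.I * ν - l ≠ 0 := by
  intro h0
  have : (Complex.I * ν - l).re = 0 := by rw [h0]; rfl
  simp [Complex.sub_re, Complex.mul_re] at this
  exact h (by linarith)

lemma aux_q (a c : ℝ) (h : a ≠ 0) :
    Tendsto (fun ω : ℝ => Real.log (a^2 + (ω + c)^2) - Real.log (ω^2)) atTop (nhds 0) := by
  have ha2 : 0 < a^2 := by positivity
  have h0 : Tendsto (fun ω : ℝ => (a/ω)^2 + (1 + c/ω)^2) atTop (nhds 1) := by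
    have ha : Tendsto (fun ω : ℝ => a/ω) atTop (nhds 0) :=
      tendsto_const_nhds.div_atTop tendsto_id
    have hc : Tendsto (fun ω : ℝ => c/ω) atTop (nhds 0) :=
      tendsto_const_nhds.div_atTop tendsto_id
    have := ((ha.pow 2).add (((tendsto_const_nhds (x := (1:ℝ))).add hc).pow 2))
    norm_num at this
    exact this
  have hlog : Tendsto (fun ω : ℝ => Real.log ((a/ω)^2 + (1 + c/ω)^2)) atTop (nhds 0) := by
    have := (Real.continuousAt_log one_ne_zero).tendsto.comp h0
    simpa [Function.comp_def] using this
  refine Filter.Tendsto.congr' ?_ hlog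
  filter_upwards [eventually_ge_atTop 1] with ω hω
  have hω0 : ω ≠ 0 := by linarith
  have hpos : 0 < a^2 + (ω+c)^2 := by positivity
  have h1 : (a/ω)^2 + (1 + c/ω)^2 = (a^2 + (ω+c)^2)/ω^2 := by
    field_simp
  rw [h1, Real.log_div hpos.ne' (by positivity)]

lemma tendsto_arctan_top (a c : ℝ) (ha : 0 < a) :
    Tendsto (fun ω : ℝ => Real.arctan ((ω + c)/a)) atTop (nhds (Real.pi/2)) := by
  have hin : Tendsto (fun ω : ℝ => (ω + c)/a) atTop atTop :=
    Tendsto.atTop_div_const ha (tendsto_atTop_add_const_right _ c tendsto_id)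
  exact (Real.tendsto_arctan_atTop.mono_right nhdsWithin_le_nhds).comp hin

lemma tendsto_arctan_bot (a c : ℝ) (ha : 0 < a) :
    Tendsto (fun ω : ℝ => Real.arctan ((-ω + c)/a)) atTop (nhds (-(Real.pi/2))) := by
  have hin : Tendsto (fun ω : ℝ => (-ω + c)/a) atTop atBot :=
    Tendsto.atBot_div_const ha
      (tendsto_atBot_add_const_right _ c tendsto_neg_atTop_atBot)
  exact (Real.tendsto_arctan_atBot.mono_right nhdsWithin_le_nhds).comp hin

lemma tendsto_prim_diff (l : ℂ) (h : l.re ≠ 0) :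
    Tendsto (fun ω : ℝ => prim l ω - prim l (-ω)) atTop
      (nhds (-(Real.pi : ℂ) * (sg l : ℂ))) := by
  set a := l.re with hae
  set b := l.im with hbe
  have hR2 : Tendsto (fun ω : ℝ =>
      Real.log (a^2 + (ω - b)^2) - Real.log (a^2 + (-ω - b)^2)) atTop (nhds 0) := by
    have h12 := (aux_q a (-b) h).sub (aux_q a b h)
    norm_num at h12
    refine h12.congr (fun ω => ?_)
    ring_nf
  have hR1 : Tendsto (fun ω : ℝ =>
      Real.arctan ((ω - b)/a) - Real.arctan ((-ω - b)/a)) atTop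
      (nhds (Real.pi * sg l)) := by
    rcases h.lt_or_gt with hneg | hpos
    · have h1 := (tendsto_arctan_top (-a) (-b) (by linarith)).neg
      have h2 := (tendsto_arctan_bot (-a) (-b) (by linarith)).neg
      have h12 := h1.sub h2
      have hsg : sg l = -1 := by simp [sg, ← hae, not_lt.2 hneg.le, hneg.not_gt]
      rw [hsg]
      have hval : -(Real.pi/2) - -(-(Real.pi/2)) = Real.pi * (-1) := by ring
      rw [← hval]
      refine h12.congr (fun ω => ?_)
      have e1 : (ω + -b)/(-a) = -((ω - b)/a) := by rw [div_neg]; ring_nf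
      have e2 : (-ω + -b)/(-a) = -((-ω - b)/a) := by rw [div_neg]; ring_nf
      rw [e1, e2, Real.arctan_neg, Real.arctan_neg]
      ring
    · have h1 := tendsto_arctan_top a (-b) hpos
      have h2 := tendsto_arctan_bot a (-b) hpos
      have h12 := h1.sub h2
      have hsg : sg l = 1 := by simp [sg, ← hae, hpos]
      rw [hsg]
      have hval : Real.pi/2 - -(Real.pi/2) = Real.pi * 1 := by ring
      rw [← hval]
      refine h12.congr (fun ω => ?_)
      norm_num [sub_eq_add_neg]
  have hC : Tendsto (fun ω : ℝ =>
      -(((Real.arctan ((ω - b)/a) - Real.arctan ((-ω - b)/a) : ℝ)) : ℂ)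
        - (Complex.I/2) * (((Real.log (a^2 + (ω - b)^2)
            - Real.log (a^2 + (-ω - b)^2) : ℝ)) : ℂ)) atTop
      (nhds (-((Real.pi * sg l : ℝ) : ℂ) - (Complex.I/2) * (((0:ℝ)) : ℂ))) :=
    (((Complex.continuous_ofReal.tendsto _).comp hR1).neg).sub
      (((Complex.continuous_ofReal.tendsto _).comp hR2).const_mul _)
  have hval : -((Real.pi * sg l : ℝ) : ℂ) - (Complex.I/2) * (((0:ℝ)) : ℂ)
      = -(Real.pi : ℂ) * (sg l : ℂ) := by push_cast; ring
  rw [← hval]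
  refine hC.congr (fun ω => ?_)
  simp only [prim, ← hae, ← hbe]
  push_cast
  ring

lemma contInt (l : ℂ) (h : l.re ≠ 0) : Continuous (fun ν : ℝ => (Complex.I * ν - l)⁻¹) := by
  apply Continuous.inv₀
  · exact (continuous_const.mul Complex.continuous_ofReal).sub continuous_const
  · exact fun ν => denom_ne l h ν

lemma tendsto_int_inv (l : ℂ) (h : l.re ≠ 0) :
    Tendsto (fun ω : ℝ => ∫ ν in (-ω)..ω, (Complex.I * ν - l)⁻¹) atTop
      (nhds (-(Real.pi : ℂ) * (sg l : ℂ))) := by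
  have key : ∀ ω : ℝ, (∫ ν in (-ω)..ω, (Complex.I * ν - l)⁻¹) = prim l ω - prim l (-ω) :=
    fun ω => intervalIntegral.integral_eq_sub_of_hasDerivAt
      (fun ν _ => prim_hasDerivAt l h ν) ((contInt l h).intervalIntegrable _ _)
  simpa only [key] using tendsto_prim_diff l h

lemma int_neg (l : ℂ) (ω : ℝ) :
    (∫ ν in (-ω)..ω, (-(Complex.I * ν) - l)⁻¹) = ∫ ν in (-ω)..ω, (Complex.I * ν - l)⁻¹ := by
  have h := intervalIntegral.integral_comp_neg (a := -ω) (b := ω)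
    (fun ν : ℝ => (Complex.I * ν - l)⁻¹)
  rw [neg_neg] at h
  rw [← h]
  apply intervalIntegral.integral_congr
  intro x _
  push_cast
  ring_nf

open Matrix in
lemma trace_expand {n n_u n_y : ℕ} (lam : Fin n → ℂ)
    (φ : Fin n → Matrix (Fin n_y) (Fin n_u) ℂ) (s t : ℂ) :
    ((∑ i, (s - lam i)⁻¹ • φ i) * (∑ k, (t - lam k)⁻¹ • φ k)ᵀ).trace
      = ∑ i, ∑ k, (s - lam i)⁻¹ * (t - lam k)⁻¹ * (φ i * (φ k)ᵀ).trace := by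
  simp only [Matrix.transpose_sum, Matrix.transpose_smul, Matrix.sum_mul, Matrix.mul_sum,
    Matrix.trace_sum, Matrix.smul_mul, Matrix.mul_smul, Matrix.trace_smul, smul_eq_mul,
    Finset.mul_sum]
  rw [Finset.sum_comm]
  refine Finset.sum_congr rfl fun i _ => Finset.sum_congr rfl fun k _ => by ring

open Matrix in
lemma trace_sym {n_u n_y : ℕ} (A B : Matrix (Fin n_y) (Fin n_u) ℂ) :
    (A * Bᵀ).trace = (B * Aᵀ).trace := by
  rw [← Matrix.trace_transpose (A * Bᵀ), Matrix.transpose_mul, Matrix.transpose_transpose,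
    Matrix.trace_mul_comm]

lemma final_alg {n : ℕ} (lam : Fin n → ℂ) (c : Fin n → Fin n → ℂ)
    (hre : ∀ i, (lam i).re ≠ 0) (hsum : ∀ i k, lam i + lam k ≠ 0)
    (hcsym : ∀ i k, c i k = c k i) :
    (2*(Real.pi:ℂ))⁻¹ * ∑ i, ∑ k, c i k *
        (-(lam i + lam k)⁻¹ *
          (-(Real.pi:ℂ) * (sg (lam i) : ℂ) + -(Real.pi:ℂ) * (sg (lam k) : ℂ)))
      = (∑ i ∈ Finset.univ.filter (fun i => (lam i).re < 0),
            ∑ k, (-lam i - lam k)⁻¹ * c i k)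
        - (∑ i ∈ Finset.univ.filter (fun i => 0 < (lam i).re),
            ∑ k, (-lam i - lam k)⁻¹ * c i k) := by
  have hπ : (Real.pi : ℂ) ≠ 0 := by exact_mod_cast Real.pi_ne_zero
  have hstep : (2*(Real.pi:ℂ))⁻¹ * ∑ i, ∑ k, c i k *
        (-(lam i + lam k)⁻¹ *
          (-(Real.pi:ℂ) * (sg (lam i) : ℂ) + -(Real.pi:ℂ) * (sg (lam k) : ℂ)))
      = ∑ i, ∑ k, (2:ℂ)⁻¹ * (((sg (lam i):ℂ) + (sg (lam k):ℂ))
          * ((lam i + lam k)⁻¹ * c i k)) := by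
    rw [Finset.mul_sum]
    refine Finset.sum_congr rfl fun i _ => ?_
    rw [Finset.mul_sum]
    refine Finset.sum_congr rfl fun k _ => ?_
    have hik := hsum i k
    field_simp
    ring
  rw [hstep]
  have hswap : ∑ i, ∑ k, (sg (lam k):ℂ) * ((lam i + lam k)⁻¹ * c i k)
      = ∑ i, ∑ k, (sg (lam i):ℂ) * ((lam i + lam k)⁻¹ * c i k) := by
    rw [Finset.sum_comm]
    refine Finset.sum_congr rfl fun i _ => Finset.sum_congr rfl fun k _ => ?_
    rw [hcsym i k, add_comm (lam k)]
  have hsym : ∑ i, ∑ k, (2:ℂ)⁻¹ * (((sg (lam i):ℂ) + (sg (lam k):ℂ))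
        * ((lam i + lam k)⁻¹ * c i k))
      = ∑ i, ∑ k, (sg (lam i):ℂ) * ((lam i + lam k)⁻¹ * c i k) := by
    have hdist : ∑ i, ∑ k, (2:ℂ)⁻¹ * (((sg (lam i):ℂ) + (sg (lam k):ℂ))
          * ((lam i + lam k)⁻¹ * c i k))
        = (2:ℂ)⁻¹ * ((∑ i, ∑ k, (sg (lam i):ℂ) * ((lam i + lam k)⁻¹ * c i k))
            + ∑ i, ∑ k, (sg (lam k):ℂ) * ((lam i + lam k)⁻¹ * c i k)) := by
      simp only [Finset.mul_sum, ← Finset.sum_add_distrib]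
      refine Finset.sum_congr rfl fun i _ => Finset.sum_congr rfl fun k _ => by ring
    rw [hdist, hswap]
    ring
  rw [hsym]
  have hfilt : Finset.univ.filter (fun i => ¬ 0 < (lam i).re)
      = Finset.univ.filter (fun i : Fin n => (lam i).re < 0) :=
    Finset.filter_congr (fun i _ => by
      rw [not_lt]
      exact ⟨fun h => h.lt_of_ne (hre i), le_of_lt⟩)
  rw [← Finset.sum_filter_add_sum_filter_not Finset.univ (fun i => 0 < (lam i).re)
    (fun i => ∑ k, (sg (lam i):ℂ) * ((lam i + lam k)⁻¹ * c i k)), hfilt]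
  have h1 : ∀ i ∈ Finset.univ.filter (fun i : Fin n => 0 < (lam i).re),
      (∑ k, (sg (lam i):ℂ) * ((lam i + lam k)⁻¹ * c i k))
        = -∑ k, (-lam i - lam k)⁻¹ * c i k := by
    intro i hi
    rw [Finset.mem_filter] at hi
    rw [← Finset.sum_neg_distrib]
    refine Finset.sum_congr rfl fun k _ => ?_
    rw [show -lam i - lam k = -(lam i + lam k) by ring, inv_neg]
    simp only [sg, if_pos hi.2]
    push_cast
    ring
  have h2 : ∀ i ∈ Finset.univ.filter (fun i : Fin n => (lam i).re < 0),
      (∑ k, (sg (lam i):ℂ) * ((lam i + lam k)⁻¹ * c i k))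
        = ∑ k, (-lam i - lam k)⁻¹ * c i k := by
    intro i hi
    rw [Finset.mem_filter] at hi
    refine Finset.sum_congr rfl fun k _ => ?_
    rw [show -lam i - lam k = -(lam i + lam k) by ring, inv_neg]
    simp only [sg, if_neg (not_lt.2 hi.2.le)]
    push_cast
    ring
  rw [Finset.sum_congr rfl h1, Finset.sum_congr rfl h2, Finset.sum_neg_distrib]
  ring

open Filter Topology in
theorem stmt_4 (n n_u n_y : ℕ) (hn : 0 < n) (hnu : 0 < n_u) (hny : 0 < n_y)
    (lam : Fin n → ℂ) (hdist : Function.Injective lam)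
    (φ : Fin n → Matrix (Fin n_y) (Fin n_u) ℂ)
    (hre : ∀ i, (lam i).re ≠ 0) (hsum : ∀ i k, lam i + lam k ≠ 0) :
    Tendsto (fun ω : ℝ => h2wSq lam φ ω) atTop
      (nhds ((∑ i ∈ Finset.univ.filter (fun i => (lam i).re < 0),
                φ i * (transferH lam φ (-lam i))ᵀ).trace
             - (∑ i ∈ Finset.univ.filter (fun i => 0 < (lam i).re),
                φ i * (transferH lam φ (-lam i))ᵀ).trace)) := by
  classical
  have hne2 : ∀ (l : ℂ), l.re ≠ 0 → ∀ ν : ℝ, -(Complex.I * ν) - l ≠ 0 := by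
    intro l h ν
    have := denom_ne l h (-ν)
    push_cast at this
    simpa [mul_neg] using this
  -- continuity of each product term
  have hcont : ∀ i k : Fin n, Continuous (fun ν : ℝ =>
      ((Complex.I * ν - lam i)⁻¹ * (-(Complex.I * ν) - lam k)⁻¹)
        * (φ i * (φ k)ᵀ).trace) := by
    intro i k
    apply Continuous.mul _ continuous_const
    refine (contInt (lam i) (hre i)).mul (Continuous.inv₀ ?_ (fun ν => hne2 (lam k) (hre k) ν))
    exact ((continuous_const.mul Complex.continuous_ofReal).neg).sub continuous_const
  -- per-pair integral evaluation
  have hik : ∀ (i k : Fin n) (ω : ℝ),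
      (∫ ν : ℝ in (-ω)..ω, ((Complex.I * ν - lam i)⁻¹ * (-(Complex.I * ν) - lam k)⁻¹)
          * (φ i * (φ k)ᵀ).trace)
        = (φ i * (φ k)ᵀ).trace * (-(lam i + lam k)⁻¹ *
            ((∫ ν : ℝ in (-ω)..ω, (Complex.I * ν - lam i)⁻¹)
              + ∫ ν : ℝ in (-ω)..ω, (Complex.I * ν - lam k)⁻¹)) := by
    intro i k ω
    have hpf : ∀ ν : ℝ, ((Complex.I * ν - lam i)⁻¹ * (-(Complex.I * ν) - lam k)⁻¹)
          * (φ i * (φ k)ᵀ).trace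
        = ((φ i * (φ k)ᵀ).trace * -(lam i + lam k)⁻¹) * (Complex.I * ν - lam i)⁻¹
          + ((φ i * (φ k)ᵀ).trace * -(lam i + lam k)⁻¹) * (-(Complex.I * ν) - lam k)⁻¹ := by
      intro ν
      have hx := denom_ne (lam i) (hre i) ν
      have hy := hne2 (lam k) (hre k) ν
      have hz := hsum i k
      field_simp
      ring
    rw [intervalIntegral.integral_congr (g := fun ν : ℝ =>
        ((φ i * (φ k)ᵀ).trace * -(lam i + lam k)⁻¹) * (Complex.I * ν - lam i)⁻¹
          + ((φ i * (φ k)ᵀ).trace * -(lam i + lam k)⁻¹) * (-(Complex.I * ν) - lam k)⁻¹)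
        (fun ν _ => hpf ν)]
    rw [intervalIntegral.integral_add (f := fun ν : ℝ =>
        ((φ i * (φ k)ᵀ).trace * -(lam i + lam k)⁻¹) * (Complex.I * ν - lam i)⁻¹)
        (g := fun ν : ℝ => ((φ i * (φ k)ᵀ).trace * -(lam i + lam k)⁻¹) * (-(Complex.I * ν) - lam k)⁻¹)
        ((continuous_const.mul (contInt (lam i) (hre i))).intervalIntegrable _ _)
        ((continuous_const.mul (Continuous.inv₀ (((continuous_const.mul Complex.continuous_ofReal).neg).sub
            continuous_const) (fun ν => hne2 (lam k) (hre k) ν))).intervalIntegrable _ _),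
      intervalIntegral.integral_const_mul, intervalIntegral.integral_const_mul, int_neg]
    ring
  -- rewrite h2wSq
  have hfun : ∀ ω : ℝ, h2wSq lam φ ω
      = (2 * (Real.pi:ℂ))⁻¹ * ∑ i, ∑ k, (φ i * (φ k)ᵀ).trace *
          (-(lam i + lam k)⁻¹ *
            ((∫ ν : ℝ in (-ω)..ω, (Complex.I * ν - lam i)⁻¹)
              + ∫ ν : ℝ in (-ω)..ω, (Complex.I * ν - lam k)⁻¹)) := by
    intro ω
    rw [h2wSq]
    congr 1
    rw [intervalIntegral.integral_congr (g := fun ν : ℝ => ∑ i, ∑ k,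
        ((Complex.I * ν - lam i)⁻¹ * (-(Complex.I * ν) - lam k)⁻¹)
          * (φ i * (φ k)ᵀ).trace)
        (fun ν _ => by simpa [transferH] using trace_expand lam φ (Complex.I * ν) (-(Complex.I * ν)))]
    rw [intervalIntegral.integral_finset_sum (fun i _ =>
      (continuous_finset_sum _ (fun k _ => hcont i k)).intervalIntegrable _ _)]
    refine Finset.sum_congr rfl fun i _ => ?_
    rw [intervalIntegral.integral_finset_sum (fun k _ => (hcont i k).intervalIntegrable _ _)]
    exact Finset.sum_congr rfl fun k _ => hik i k ω
  -- the limit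
  have hTi : ∀ i : Fin n, Tendsto (fun ω : ℝ => ∫ ν : ℝ in (-ω)..ω, (Complex.I * ν - lam i)⁻¹)
      atTop (nhds (-(Real.pi:ℂ) * (sg (lam i) : ℂ))) := fun i => tendsto_int_inv (lam i) (hre i)
  have hT : Tendsto (fun ω : ℝ => h2wSq lam φ ω) atTop
      (nhds ((2 * (Real.pi:ℂ))⁻¹ * ∑ i, ∑ k, (φ i * (φ k)ᵀ).trace *
        (-(lam i + lam k)⁻¹ *
          (-(Real.pi:ℂ) * (sg (lam i) : ℂ) + -(Real.pi:ℂ) * (sg (lam k) : ℂ))))) := by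
    refine Tendsto.congr (fun ω => (hfun ω).symm) ?_
    apply Tendsto.const_mul
    refine tendsto_finset_sum _ fun i _ => tendsto_finset_sum _ fun k _ => ?_
    exact (((hTi i).add (hTi k)).const_mul _).const_mul _
  -- identify the limit value
  have htr : ∀ S : Finset (Fin n),
      (∑ i ∈ S, φ i * (transferH lam φ (-lam i))ᵀ).trace
        = ∑ i ∈ S, ∑ k, (-lam i - lam k)⁻¹ * (φ i * (φ k)ᵀ).trace := by
    intro S
    rw [Matrix.trace_sum]
    refine Finset.sum_congr rfl fun i _ => ?_
    simp [transferH, Matrix.transpose_sum, Matrix.transpose_smul, Matrix.mul_sum,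
      Matrix.trace_sum, Matrix.mul_smul, Matrix.trace_smul, smul_eq_mul]
  have hval := final_alg lam (fun i k => (φ i * (φ k)ᵀ).trace) hre hsum
    (fun i k => trace_sym (φ i) (φ k))
  rw [htr, htr, ← hval]
  exact hT
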